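/- Let Ω ⊆ ℂ be open, let Q : Ω → ℝ be real-valued, let λ ∈ ℂ, and let u : Ω → ℂ be of class C² satisfying u_{zz̄}(z) + λ·(∂u/∂z̄)(z) = Q(z)·u(z) on Ω. Then the function v(z) := e_{−λ}(z)·conj(u(z)) is of class C² and satisfies the same equation: v_{zz̄}(z) + λ·(∂v/∂z̄)(z) = Q(z)·v(z) on Ω. -/

import Mathlib

open Complex MeasureTheory Filter Topology

/-- Wirtinger derivative `∂f/∂z`. -/
noncomputable def wdz (f : ℂ → ℂ) (z : ℂ) : ℂ :=
  (1 / 2) * ((fderiv ℝ f z) 1 - Complex.I • (fderiv ℝ f z) Complex.I)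

/-- Wirtinger derivative `∂f/∂z̄`. -/
noncomputable def wdzbar (f : ℂ → ℂ) (z : ℂ) : ℂ :=
  (1 / 2) * ((fderiv ℝ f z) 1 + Complex.I • (fderiv ℝ f z) Complex.I)

/-- `√σ` as a complex-valued function. -/
noncomputable def sqrtC (σ : ℂ → ℝ) (z : ℂ) : ℂ := (Real.sqrt (σ z) : ℂ)

/-- The conductivity-type potential `Q = (√σ)_{z z̄} / √σ`. -/
noncomputable def Qpot (σ : ℂ → ℝ) (z : ℂ) : ℂ :=
  wdz (fun w => wdzbar (sqrtC σ) w) z / sqrtC σ z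

/-- `g` has an `L^p` tail: `∫_{|z| ≥ 1} |g|^p dA < ∞`. -/
def HasLpTail (p : ℝ) (g : ℂ → ℂ) : Prop :=
  MeasureTheory.IntegrableOn (fun z => ‖g z‖ ^ p)
    {z : ℂ | 1 ≤ ‖z‖} MeasureTheory.volume

/-- `e_λ(z) = exp(λz - conj λ · conj z)`, a function of modulus 1. -/
noncomputable def expPos (lam z : ℂ) : ℂ :=
  Complex.exp (lam * z - (starRingEnd ℂ) lam * (starRingEnd ℂ) z)

/-- `e_{-λ}(z) = exp(conj λ · conj z - λz)`, a function of modulus 1. -/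
noncomputable def expNeg (lam z : ℂ) : ℂ :=
  Complex.exp ((starRingEnd ℂ) lam * (starRingEnd ℂ) z - lam * z)

/- ### Auxiliary lemmas on Wirtinger derivatives -/

lemma wdz_congr {f g : ℂ → ℂ} {z : ℂ} (h : f =ᶠ[nhds z] g) : wdz f z = wdz g z := by
  rw [wdz, wdz, h.fderiv_eq]

lemma wdz_conj (u : ℂ → ℂ) (z : ℂ) (hu : DifferentiableAt ℝ u z) :
    wdz (fun w => (starRingEnd ℂ) (u w)) z = (starRingEnd ℂ) (wdzbar u z) := by
  have h : HasFDerivAt (fun w => (starRingEnd ℂ) (u w))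
      ((Complex.conjCLE.toContinuousLinearMap).comp (fderiv ℝ u z)) z :=
    (Complex.conjCLE.toContinuousLinearMap.hasFDerivAt.comp z hu.hasFDerivAt)
  rw [wdz, wdzbar, h.fderiv]
  simp [Complex.conjCLE_apply, smul_eq_mul, map_mul, map_add, Complex.conj_I, map_ofNat]
  ring

lemma wdzbar_conj (u : ℂ → ℂ) (z : ℂ) (hu : DifferentiableAt ℝ u z) :
    wdzbar (fun w => (starRingEnd ℂ) (u w)) z = (starRingEnd ℂ) (wdz u z) := by
  have h : HasFDerivAt (fun w => (starRingEnd ℂ) (u w))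
      ((Complex.conjCLE.toContinuousLinearMap).comp (fderiv ℝ u z)) z :=
    (Complex.conjCLE.toContinuousLinearMap.hasFDerivAt.comp z hu.hasFDerivAt)
  rw [wdz, wdzbar, h.fderiv]
  simp [Complex.conjCLE_apply, smul_eq_mul, map_mul, map_sub, Complex.conj_I, map_ofNat]

lemma wdz_mul (f g : ℂ → ℂ) (z : ℂ) (hf : DifferentiableAt ℝ f z)
    (hg : DifferentiableAt ℝ g z) :
    wdz (fun w => f w * g w) z = wdz f z * g z + f z * wdz g z := by
  rw [wdz, wdz, wdz, fderiv_fun_mul hf hg]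
  simp [smul_eq_mul]
  ring

lemma wdzbar_mul (f g : ℂ → ℂ) (z : ℂ) (hf : DifferentiableAt ℝ f z)
    (hg : DifferentiableAt ℝ g z) :
    wdzbar (fun w => f w * g w) z = wdzbar f z * g z + f z * wdzbar g z := by
  rw [wdzbar, wdzbar, wdzbar, fderiv_fun_mul hf hg]
  simp [smul_eq_mul]
  ring

lemma wdz_add (f g : ℂ → ℂ) (z : ℂ) (hf : DifferentiableAt ℝ f z)
    (hg : DifferentiableAt ℝ g z) :
    wdz (fun w => f w + g w) z = wdz f z + wdz g z := by
  rw [wdz, wdz, wdz, fderiv_fun_add hf hg]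
  simp [smul_eq_mul]
  ring

lemma wdz_const_mul (f : ℂ → ℂ) (c z : ℂ) (hf : DifferentiableAt ℝ f z) :
    wdz (fun w => c * f w) z = c * wdz f z := by
  rw [wdz, wdz, fderiv_const_mul hf c]
  simp [smul_eq_mul]
  ring

lemma contDiff_conj' {n : WithTop ℕ∞} : ContDiff ℝ n (fun w : ℂ => (starRingEnd ℂ) w) :=
  Complex.conjCLE.toContinuousLinearMap.contDiff

lemma contDiff_expNeg (lam : ℂ) {n : WithTop ℕ∞} : ContDiff ℝ n (expNeg lam) := by
  have hg : ContDiff ℝ n (fun w : ℂ => (starRingEnd ℂ) lam * (starRingEnd ℂ) w - lam * w) :=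
    (contDiff_const.mul contDiff_conj').sub (contDiff_const.mul contDiff_id)
  exact Complex.contDiff_exp.comp hg

lemma hasFDerivAt_expNeg (lam z : ℂ) :
    HasFDerivAt (expNeg lam)
      (expNeg lam z •
        (((starRingEnd ℂ) lam) • Complex.conjCLE.toContinuousLinearMap
          - lam • ContinuousLinearMap.id ℝ ℂ)) z := by
  have hconj : HasFDerivAt (fun w : ℂ => (starRingEnd ℂ) w)
      Complex.conjCLE.toContinuousLinearMap z :=
    Complex.conjCLE.toContinuousLinearMap.hasFDerivAt
  have hg : HasFDerivAt (fun w : ℂ => (starRingEnd ℂ) lam * (starRingEnd ℂ) w - lam * w)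
      (((starRingEnd ℂ) lam) • Complex.conjCLE.toContinuousLinearMap
        - lam • ContinuousLinearMap.id ℝ ℂ) z :=
    (hconj.const_mul _).sub ((hasFDerivAt_id z).const_mul lam)
  have he := ((Complex.hasDerivAt_exp ((starRingEnd ℂ) lam * (starRingEnd ℂ) z
    - lam * z)).hasFDerivAt.restrictScalars ℝ).comp z hg
  refine he.congr_fderiv ?_
  ext v
  simp [expNeg, smul_eq_mul]
  ring

lemma wdz_expNeg (lam z : ℂ) : wdz (expNeg lam) z = -lam * expNeg lam z := by
  rw [wdz, (hasFDerivAt_expNeg lam z).fderiv]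
  simp [smul_eq_mul, Complex.conjCLE_apply, Complex.conj_I]
  linear_combination (expNeg lam z * ((starRingEnd ℂ) lam + lam))/2 * Complex.I_sq

lemma wdzbar_expNeg (lam z : ℂ) :
    wdzbar (expNeg lam) z = (starRingEnd ℂ) lam * expNeg lam z := by
  rw [wdzbar, (hasFDerivAt_expNeg lam z).fderiv]
  simp [smul_eq_mul, Complex.conjCLE_apply, Complex.conj_I]
  linear_combination (-(expNeg lam z * ((starRingEnd ℂ) lam + lam))/2) * Complex.I_sq

lemma hasFDerivAt_wdzbar {u : ℂ → ℂ} {z : ℂ} (hu : ContDiffAt ℝ 2 u z) :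
    HasFDerivAt (fun w => wdzbar u w)
      (((1:ℂ)/2) • (((ContinuousLinearMap.apply ℝ ℂ (1:ℂ)).comp (fderiv ℝ (fderiv ℝ u) z))
        + Complex.I • ((ContinuousLinearMap.apply ℝ ℂ Complex.I).comp
          (fderiv ℝ (fderiv ℝ u) z)))) z := by
  have hF : ContDiffAt ℝ 1 (fderiv ℝ u) z := hu.fderiv_right (by norm_num)
  have hF' : HasFDerivAt (fderiv ℝ u) (fderiv ℝ (fderiv ℝ u) z) z :=
    (hF.differentiableAt one_ne_zero).hasFDerivAt
  have h1 : HasFDerivAt (fun w => (fderiv ℝ u w) 1)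
      ((ContinuousLinearMap.apply ℝ ℂ (1:ℂ)).comp (fderiv ℝ (fderiv ℝ u) z)) z :=
    (ContinuousLinearMap.apply ℝ ℂ (1:ℂ)).hasFDerivAt.comp z hF'
  have hI : HasFDerivAt (fun w => (fderiv ℝ u w) Complex.I)
      ((ContinuousLinearMap.apply ℝ ℂ Complex.I).comp (fderiv ℝ (fderiv ℝ u) z)) z :=
    (ContinuousLinearMap.apply ℝ ℂ Complex.I).hasFDerivAt.comp z hF'
  have := (h1.add (hI.const_mul Complex.I)).const_mul ((1:ℂ)/2)
  exact this

lemma hasFDerivAt_wdz {u : ℂ → ℂ} {z : ℂ} (hu : ContDiffAt ℝ 2 u z) :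
    HasFDerivAt (fun w => wdz u w)
      (((1:ℂ)/2) • (((ContinuousLinearMap.apply ℝ ℂ (1:ℂ)).comp (fderiv ℝ (fderiv ℝ u) z))
        - Complex.I • ((ContinuousLinearMap.apply ℝ ℂ Complex.I).comp
          (fderiv ℝ (fderiv ℝ u) z)))) z := by
  have hF : ContDiffAt ℝ 1 (fderiv ℝ u) z := hu.fderiv_right (by norm_num)
  have hF' : HasFDerivAt (fderiv ℝ u) (fderiv ℝ (fderiv ℝ u) z) z :=
    (hF.differentiableAt one_ne_zero).hasFDerivAt
  have h1 : HasFDerivAt (fun w => (fderiv ℝ u w) 1)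
      ((ContinuousLinearMap.apply ℝ ℂ (1:ℂ)).comp (fderiv ℝ (fderiv ℝ u) z)) z :=
    (ContinuousLinearMap.apply ℝ ℂ (1:ℂ)).hasFDerivAt.comp z hF'
  have hI : HasFDerivAt (fun w => (fderiv ℝ u w) Complex.I)
      ((ContinuousLinearMap.apply ℝ ℂ Complex.I).comp (fderiv ℝ (fderiv ℝ u) z)) z :=
    (ContinuousLinearMap.apply ℝ ℂ Complex.I).hasFDerivAt.comp z hF'
  have := (h1.sub (hI.const_mul Complex.I)).const_mul ((1:ℂ)/2)
  exact this

lemma wdz_wdzbar_comm {u : ℂ → ℂ} {z : ℂ} (hu : ContDiffAt ℝ 2 u z) :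
    wdz (fun w => wdzbar u w) z = wdzbar (fun w => wdz u w) z := by
  have hsym : ∀ v w, fderiv ℝ (fderiv ℝ u) z v w = fderiv ℝ (fderiv ℝ u) z w v :=
    hu.isSymmSndFDerivAt (by simp)
  rw [wdz, wdzbar, (hasFDerivAt_wdzbar hu).fderiv, (hasFDerivAt_wdz hu).fderiv]
  simp [smul_eq_mul, ContinuousLinearMap.apply_apply]
  rw [hsym Complex.I 1]
  ring

/-- Conjugation-twist symmetry (used in Proposition 4.1): for a real potential
`Q`, if `u` solves the Faddeev-type equation then so does `v = e_{-λ} · conj u`. -/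
theorem faddeev_conjugation_symmetry_planar
    (Ω : Set ℂ) (hΩ : IsOpen Ω) (Q : ℂ → ℝ) (lam : ℂ)
    (u : ℂ → ℂ) (hu : ContDiffOn ℝ 2 u Ω)
    (heq : ∀ z ∈ Ω,
      wdz (fun w => wdzbar u w) z + lam * wdzbar u z = (Q z : ℂ) * u z) :
    ContDiffOn ℝ 2 (fun w => expNeg lam w * (starRingEnd ℂ) (u w)) Ω ∧
    ∀ z ∈ Ω,
      wdz (fun w => wdzbar (fun x => expNeg lam x * (starRingEnd ℂ) (u x)) w) z +
        lam * wdzbar (fun x => expNeg lam x * (starRingEnd ℂ) (u x)) z =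
        (Q z : ℂ) * (expNeg lam z * (starRingEnd ℂ) (u z)) := by
  have hconjU : ContDiffOn ℝ 2 (fun w => (starRingEnd ℂ) (u w)) Ω :=
    contDiff_conj'.comp_contDiffOn hu
  have hV : ContDiffOn ℝ 2 (fun w => expNeg lam w * (starRingEnd ℂ) (u w)) Ω :=
    ((contDiff_expNeg lam).contDiffOn).mul hconjU
  refine ⟨hV, fun z hz => ?_⟩
  have hzΩ : Ω ∈ 𝓝 z := hΩ.mem_nhds hz
  have huz : ContDiffAt ℝ 2 u z := hu.contDiffAt hzΩ
  have hdEz : ∀ w : ℂ, DifferentiableAt ℝ (expNeg lam) w := fun w =>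
    ((contDiff_expNeg lam (n := 2)).differentiable two_ne_zero) w
  -- eventual product-rule formula for ∂v/∂z̄
  have hveq : (fun w => wdzbar (fun x => expNeg lam x * (starRingEnd ℂ) (u x)) w)
      =ᶠ[𝓝 z] (fun w => expNeg lam w *
        ((starRingEnd ℂ) lam * (starRingEnd ℂ) (u w) + (starRingEnd ℂ) (wdz u w))) := by
    filter_upwards [hzΩ] with w hw
    have hwu : DifferentiableAt ℝ u w :=
      (hu.contDiffAt (hΩ.mem_nhds hw)).differentiableAt two_ne_zero
    have hdc : DifferentiableAt ℝ (fun x => (starRingEnd ℂ) (u x)) w :=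
      (Complex.conjCLE.toContinuousLinearMap.differentiableAt).comp w hwu
    have hmul : wdzbar (fun x => expNeg lam x * (starRingEnd ℂ) (u x)) w
        = wdzbar (expNeg lam) w * (starRingEnd ℂ) (u w)
          + expNeg lam w * wdzbar (fun x => (starRingEnd ℂ) (u x)) w :=
      wdzbar_mul _ _ w (hdEz w) hdc
    rw [hmul, wdzbar_conj u w hwu, wdzbar_expNeg]
    ring
  -- differentiability of the pieces at z
  have hwdzu_diff : DifferentiableAt ℝ (fun w => wdz u w) z :=
    (hasFDerivAt_wdz huz).differentiableAt
  have hduz : DifferentiableAt ℝ u z := huz.differentiableAt two_ne_zero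
  have hdcz : DifferentiableAt ℝ (fun x => (starRingEnd ℂ) (u x)) z :=
    (Complex.conjCLE.toContinuousLinearMap.differentiableAt).comp z hduz
  have hdc2 : DifferentiableAt ℝ (fun w => (starRingEnd ℂ) (wdz u w)) z :=
    (Complex.conjCLE.toContinuousLinearMap.differentiableAt).comp z hwdzu_diff
  have hg_diff : DifferentiableAt ℝ
      (fun w => (starRingEnd ℂ) lam * (starRingEnd ℂ) (u w) + (starRingEnd ℂ) (wdz u w)) z :=
    ((hdcz.const_mul _).add hdc2)
  -- compute wdz of the second factor
  have hsum : wdz (fun w => (starRingEnd ℂ) lam * (starRingEnd ℂ) (u w)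
        + (starRingEnd ℂ) (wdz u w)) z
      = (starRingEnd ℂ) lam * (starRingEnd ℂ) (wdzbar u z)
        + (starRingEnd ℂ) (wdz (fun w => wdzbar u w) z) := by
    have h1 : wdz (fun w => (starRingEnd ℂ) lam * (starRingEnd ℂ) (u w)
          + (starRingEnd ℂ) (wdz u w)) z
        = wdz (fun w => (starRingEnd ℂ) lam * (starRingEnd ℂ) (u w)) z
          + wdz (fun w => (starRingEnd ℂ) (wdz u w)) z :=
      wdz_add _ _ z (hdcz.const_mul _) hdc2
    have h2 : wdz (fun w => (starRingEnd ℂ) lam * (starRingEnd ℂ) (u w)) z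
        = (starRingEnd ℂ) lam * wdz (fun w => (starRingEnd ℂ) (u w)) z :=
      wdz_const_mul _ _ z hdcz
    rw [h1, h2, wdz_conj u z hduz, wdz_conj _ z hwdzu_diff, wdz_wdzbar_comm huz]
  -- compute the two Wirtinger derivatives of v at z
  have hbarv : wdzbar (fun x => expNeg lam x * (starRingEnd ℂ) (u x)) z
      = expNeg lam z *
        ((starRingEnd ℂ) lam * (starRingEnd ℂ) (u z) + (starRingEnd ℂ) (wdz u z)) :=
    hveq.self_of_nhds
  have hzbarv : wdz (fun w => wdzbar (fun x => expNeg lam x * (starRingEnd ℂ) (u x)) w) z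
      = -lam * expNeg lam z *
          ((starRingEnd ℂ) lam * (starRingEnd ℂ) (u z) + (starRingEnd ℂ) (wdz u z))
        + expNeg lam z *
          ((starRingEnd ℂ) lam * (starRingEnd ℂ) (wdzbar u z)
            + (starRingEnd ℂ) (wdz (fun w => wdzbar u w) z)) := by
    rw [wdz_congr hveq]
    have hmul : wdz (fun w => expNeg lam w *
        ((starRingEnd ℂ) lam * (starRingEnd ℂ) (u w) + (starRingEnd ℂ) (wdz u w))) z
        = wdz (expNeg lam) z *
            ((starRingEnd ℂ) lam * (starRingEnd ℂ) (u z) + (starRingEnd ℂ) (wdz u z))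
          + expNeg lam z * wdz (fun w => (starRingEnd ℂ) lam * (starRingEnd ℂ) (u w)
              + (starRingEnd ℂ) (wdz u w)) z :=
      wdz_mul _ _ z (hdEz z) hg_diff
    rw [hmul, hsum, wdz_expNeg]
  -- conjugate of the equation for u
  have hC := congrArg (starRingEnd ℂ) (heq z hz)
  simp only [map_add, map_mul, Complex.conj_ofReal] at hC
  rw [hzbarv, hbarv]
  linear_combination expNeg lam z * hC
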